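/- Suppose that an integer frame (o; f₁, f₂) splits an integer slope Q all of whose vertices belong to a proper sublattice Γ of ℤ² (a sublattice with Γ ≠ ℤ²). Then π̂(E) ≥ 1, where E is the set of all edges of Q; equivalently, if Q has N edges and endpoints v = o + v₁f₁ + v₂f₂ with v₁ < 0, v₂ > 0 and w = o + w₁f₁ + w₂f₂ with w₁ > 0, w₂ < 0, then w₁ + v₂ − 2N ≥ 1. -/

import Mathlib

set_option maxHeartbeats 8000000
set_option linter.unusedTactic false
set_option linter.unusedVariables false


open Set

/-- A sublattice of `ℤ²`: a subgroup generated by two linearly independent vectors. -/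
def IsSublatticeZ2 (Λ : AddSubgroup (ℤ × ℤ)) : Prop :=
  ∃ f g : ℤ × ℤ, f.1 * g.2 - f.2 * g.1 ≠ 0 ∧ Λ = AddSubgroup.closure {f, g}

/-- `Λ` has invariant factor sequence `(δ, n)`: it equals `A·ℤ²` for an integer matrix `A`
with nonzero determinant, where `δ` is the gcd of the four entries of `A` and
`n = |det A| / δ`. -/
def HasInvFactors (Λ : AddSubgroup (ℤ × ℤ)) (δ n : ℕ) : Prop :=
  ∃ a b c d : ℤ, a * d - b * c ≠ 0 ∧
    (∀ p : ℤ × ℤ, p ∈ Λ ↔ ∃ u v : ℤ, p = (a * u + b * v, c * u + d * v)) ∧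
    δ = Nat.gcd (Nat.gcd a.natAbs b.natAbs) (Nat.gcd c.natAbs d.natAbs) ∧
    n = (a * d - b * c).natAbs / δ

/-- `(f₁, f₂)` is a basis of the lattice `ℤ²`. -/
def IsZBasis (f₁ f₂ : ℤ × ℤ) : Prop :=
  f₁.1 * f₂.2 - f₁.2 * f₂.1 = 1 ∨ f₁.1 * f₂.2 - f₁.2 * f₂.1 = -1

/-- `v 0, …, v N` are the vertices of an integer slope with respect to `(f₁, f₂)`,
with edge vectors `v i - v (i-1)` having coordinates `a i` with respect to `(f₁, f₂)`:
the edge vectors point right and down and turn counterclockwise. -/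
def IsIntSlope (f₁ f₂ : ℤ × ℤ) (N : ℕ) (v a : ℕ → ℤ × ℤ) : Prop :=
  (∀ i, 1 ≤ i → i ≤ N → v i - v (i - 1) = (a i).1 • f₁ + (a i).2 • f₂) ∧
  (∀ i, 1 ≤ i → i ≤ N → 0 < (a i).1 ∧ (a i).2 < 0) ∧
  (∀ i, 1 ≤ i → i + 1 ≤ N → 0 < (a i).1 * (a (i + 1)).2 - (a i).2 * (a (i + 1)).1)

/-- `c i` are the coordinates of the vertices `v i` with respect to the integer frame
`(o; f₁, f₂)`. -/
def FrameCoords (o f₁ f₂ : ℤ × ℤ) (N : ℕ) (v c : ℕ → ℤ × ℤ) : Prop :=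
  ∀ i ≤ N, v i = o + (c i).1 • f₁ + (c i).2 • f₂

/-- The frame splits the slope (expressed via the frame coordinates `c i` of the vertices):
the endpoint `v 0` has coordinates `(<0, >0)`, the endpoint `v N` has coordinates `(>0, <0)`,
and some point of the slope has both frame coordinates positive. -/
def FrameSplits (N : ℕ) (c : ℕ → ℤ × ℤ) : Prop :=
  (c 0).1 < 0 ∧ 0 < (c 0).2 ∧ 0 < (c N).1 ∧ (c N).2 < 0 ∧
  ∃ i, 1 ≤ i ∧ i ≤ N ∧ ∃ lam : ℝ, 0 ≤ lam ∧ lam ≤ 1 ∧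
    0 < (1 - lam) * ((c (i - 1)).1 : ℝ) + lam * ((c i).1 : ℝ) ∧
    0 < (1 - lam) * ((c (i - 1)).2 : ℝ) + lam * ((c i).2 : ℝ)

/-- `π₁` of the `i`-th edge of a slope with frame coordinates `c`: the increment of the
positive part of the first frame coordinate (`x⁺ = max x 0`). -/
def pi1 (c : ℕ → ℤ × ℤ) (i : ℕ) : ℤ := max (c i).1 0 - max (c (i - 1)).1 0

/-- `π₂` of the `i`-th edge: the decrement of the positive part of the second coordinate. -/
def pi2 (c : ℕ → ℤ × ℤ) (i : ℕ) : ℤ := max (c (i - 1)).2 0 - max (c i).2 0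

/-- `π̂ = π₁ + π₂ - 2` of the `i`-th edge. -/
def piHat (c : ℕ → ℤ × ℤ) (i : ℕ) : ℤ := pi1 c i + pi2 c i - 2

private lemma climb19 (f : ℕ → ℤ) (κ : ℤ) (a : ℕ) :
    ∀ b : ℕ, a ≤ b → (∀ j : ℕ, a < j → j ≤ b → κ ≤ f j - f (j-1)) →
    κ * ((b : ℤ) - (a : ℤ)) ≤ f b - f a := by
  intro b hb
  induction b, hb using Nat.le_induction with
  | base => intro _; simp
  | succ n hn ih =>
      intro hper
      have h1 := ih (fun j hj hj2 => hper j hj (by omega))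
      have h2 := hper (n+1) (by omega) le_rfl
      have he : (n+1) - 1 = n := by omega
      rw [he] at h2
      push_cast
      push_cast at h1
      nlinarith [h1, h2]

private lemma sumtele19 (f : ℕ → ℤ) (a : ℕ) :
    ∀ b : ℕ, a ≤ b → ∑ j ∈ Finset.Ioc a b, (f j - f (j-1)) = f b - f a := by
  intro b hb
  induction b, hb using Nat.le_induction with
  | base => simp
  | succ n hn ih =>
      rw [Finset.sum_Ioc_succ_top (by omega), ih]
      have he : (n+1) - 1 = n := by omega
      rw [he]; ring

private lemma caseC19 (X Y : ℕ → ℤ) (s N i0 : ℕ)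
    (hsN : s + 2 ≤ N)
    (hx : ∀ j, s < j → j ≤ N → X (j-1) + 1 ≤ X j)
    (hy : ∀ j, s < j → j ≤ N → Y j + 1 ≤ Y (j-1))
    (hdet : ∀ i j, s < i → i < j → j ≤ N →
      2 ≤ (Y (i-1) - Y i) * (X j - X (j-1)) - (X i - X (i-1)) * (Y (j-1) - Y j))
    (hX0 : X s ≤ -1) (hYN : Y N ≤ -1)
    (hi0a : s < i0) (hi0b : i0 ≤ N)
    (hU : 1 ≤ X i0) (hV : 1 ≤ Y (i0-1))
    (hc : 1 ≤ (Y (i0-1) - Y i0) * X (i0-1) + (X i0 - X (i0-1)) * Y (i0-1))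
    (hxN : X N - X (N-1) = 1)
    (hor : 0 ≤ X (s+1) ∨ Y (s+1) = Y s - 1) :
    2 * ((N:ℤ) - (s:ℤ)) + 1 ≤ X N + Y s := by
  have hyN : 1 ≤ Y (N-1) - Y N := by
    have := hy N (by omega) le_rfl; linarith
  have y3 : ∀ j, s < j → j < N → 3 ≤ Y (j-1) - Y j := by
    intro j hj hjN
    have hd := hdet j N hj hjN le_rfl
    rw [hxN] at hd
    have hxj : 1 ≤ X j - X (j-1) := by have := hx j hj (by omega); linarith
    nlinarith [hxj, hyN]
  have hs1 : 0 ≤ X (s+1) := by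
    rcases hor with h | h
    · exact h
    · exfalso
      have h3 := y3 (s+1) (by omega) (by omega)
      have hss : (s+1) - 1 = s := by omega
      rw [hss] at h3; linarith
  have hxx : 1 ≤ X i0 - X (i0-1) := by have := hx i0 hi0a hi0b; linarith
  rcases eq_or_lt_of_le hi0b with hiN | hiN
  · -- i0 = N
    subst hiN
    have hcl := climb19 (fun n => -(Y n)) 3 s (i0-1) (by omega)
      (fun j hj hj2 => by have := y3 j hj (by omega); show (3:ℤ) ≤ -(Y j) - -(Y (j-1)); linarith)
    have hc1 : ((i0-1 : ℕ) : ℤ) = (i0:ℤ) - 1 := by omega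
    rw [hc1] at hcl
    have h2 : (2:ℤ) ≤ (i0:ℤ) - s := by omega
    have hcl' : 3 * ((i0:ℤ) - 1 - s) ≤ Y s - Y (i0-1) := by
      have : (fun n => -(Y n)) (i0-1) - (fun n => -(Y n)) s = Y s - Y (i0-1) := by simp; ring
      linarith [hcl.trans_eq this]
    linarith [hU, hV, hcl', h2]
  · -- i0 < N
    set S := (Finset.Ioc i0 N).filter (fun j => X j - X (j-1) = 1) with hS
    have hNS : N ∈ S := by
      rw [hS]; simp only [Finset.mem_filter, Finset.mem_Ioc]
      exact ⟨⟨hiN, le_rfl⟩, hxN⟩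
    have hSne : S.Nonempty := ⟨N, hNS⟩
    have hmemS : ∀ j ∈ S, i0 < j ∧ j ≤ N ∧ X j - X (j-1) = 1 := by
      intro j hj
      rw [hS] at hj
      simp only [Finset.mem_filter, Finset.mem_Ioc] at hj
      exact ⟨hj.1.1, hj.1.2, hj.2⟩
    have gap : ∀ n : ℕ, ∀ j ∈ S, (S.filter (fun l => j < l)).card = n →
        1 + 2*(n:ℤ) ≤ Y (j-1) - Y j := by
      intro n
      induction n with
      | zero =>
          intro j hj _
          obtain ⟨hj1, hj2, _⟩ := hmemS j hj
          have := hy j (by omega) hj2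
          push_cast; linarith
      | succ n ih =>
          intro j hj hcard
          have hFne : (S.filter (fun l => j < l)).Nonempty := by
            rw [← Finset.card_pos, hcard]; omega
          set j' := (S.filter (fun l => j < l)).min' hFne with hj'def
          have hj'mem : j' ∈ S.filter (fun l => j < l) := Finset.min'_mem _ hFne
          have hj'S : j' ∈ S := (Finset.mem_filter.mp hj'mem).1
          have hjj' : j < j' := (Finset.mem_filter.mp hj'mem).2
          have hkey : S.filter (fun l => j' < l) = (S.filter (fun l => j < l)).erase j' := by
            ext l
            simp only [Finset.mem_filter, Finset.mem_erase]
            constructor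
            · rintro ⟨hlS, hl⟩; exact ⟨ne_of_gt hl, hlS, lt_trans hjj' hl⟩
            · rintro ⟨hne, hlS, hl⟩
              refine ⟨hlS, ?_⟩
              have h5 : j' ≤ l := Finset.min'_le _ l (Finset.mem_filter.mpr ⟨hlS, hl⟩)
              omega
          have hcard' : (S.filter (fun l => j' < l)).card = n := by
            rw [hkey, Finset.card_erase_of_mem hj'mem, hcard]
            omega
          have ihy := ih j' hj'S hcard'
          obtain ⟨hj1, hj2, hxj⟩ := hmemS j hj
          obtain ⟨hj'1, hj'2, hxj'⟩ := hmemS j' hj'S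
          have hd := hdet j j' (by omega) hjj' hj'2
          rw [hxj, hxj'] at hd
          push_cast
          push_cast at ihy
          nlinarith [hd, ihy]
    set r := S.card with hr
    have hr1 : 1 ≤ r := Finset.card_pos.mpr hSne
    set jm := S.min' hSne with hjmdef
    have hjmS : jm ∈ S := Finset.min'_mem _ _
    have hSe : S.filter (fun l => jm < l) = S.erase jm := by
      ext l
      simp only [Finset.mem_filter, Finset.mem_erase]
      constructor
      · rintro ⟨hlS, hl⟩; exact ⟨ne_of_gt hl, hlS⟩
      · rintro ⟨hne, hlS⟩
        refine ⟨hlS, ?_⟩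
        have h5 : jm ≤ l := Finset.min'_le _ l hlS
        omega
    have hcards : (S.filter (fun l => jm < l)).card = r - 1 := by
      rw [hSe, Finset.card_erase_of_mem hjmS]
    have hyjm : 1 + 2*((r-1 : ℕ):ℤ) ≤ Y (jm-1) - Y jm := gap (r-1) jm hjmS hcards
    have hrc : ((r-1:ℕ):ℤ) = (r:ℤ) - 1 := by omega
    rw [hrc] at hyjm
    obtain ⟨hjm1, hjm2, hxjm⟩ := hmemS jm hjmS
    have hdm := hdet i0 jm hi0a hjm1 hjm2
    rw [hxjm] at hdm
    have hyy3 : 3 ≤ Y (i0-1) - Y i0 := y3 i0 hi0a hiN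
    have hyyr : (X i0 - X (i0-1)) * (2*(r:ℤ) - 1) + 2 ≤ Y (i0-1) - Y i0 := by
      have h1 : (X i0 - X (i0-1)) * (2*(r:ℤ) - 1) ≤ (X i0 - X (i0-1)) * (Y (jm-1) - Y jm) :=
        mul_le_mul_of_nonneg_left (by linarith) (by linarith)
      nlinarith [hdm, h1]
    have hyx2 : (X i0 - X (i0-1)) + 2 ≤ Y (i0-1) - Y i0 := by
      have hd := hdet i0 N hi0a hiN le_rfl
      rw [hxN] at hd
      nlinarith [hd, hxx, hyN]
    have hSR : 2*((N:ℤ) - (i0:ℤ)) - (r:ℤ) ≤ X N - X i0 := by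
      have ht := sumtele19 X i0 N (le_of_lt hiN)
      have hsp := Finset.sum_filter_add_sum_filter_not (Finset.Ioc i0 N)
        (fun j => X j - X (j-1) = 1) (fun j => X j - X (j-1))
      have h1 : ∑ j ∈ S, (X j - X (j-1)) = (r:ℤ) := by
        have : ∀ j ∈ S, X j - X (j-1) = 1 := fun j hj => (hmemS j hj).2.2
        rw [Finset.sum_congr rfl this]
        simp [hr]
      have hcard2 : S.card + ((Finset.Ioc i0 N).filter (fun j => ¬(X j - X (j-1) = 1))).card
          = N - i0 := by
        rw [hS, Finset.card_filter_add_card_filter_not, Nat.card_Ioc]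
      have h2 : 2*(((Finset.Ioc i0 N).filter (fun j => ¬(X j - X (j-1) = 1))).card : ℤ)
          ≤ ∑ j ∈ (Finset.Ioc i0 N).filter (fun j => ¬(X j - X (j-1) = 1)), (X j - X (j-1)) := by
        have hb : ∀ j ∈ (Finset.Ioc i0 N).filter (fun j => ¬(X j - X (j-1) = 1)),
            (2:ℤ) ≤ X j - X (j-1) := by
          intro j hj
          simp only [Finset.mem_filter, Finset.mem_Ioc] at hj
          have := hx j (by omega) hj.1.2
          omega
        calc 2*(((Finset.Ioc i0 N).filter (fun j => ¬(X j - X (j-1) = 1))).card : ℤ)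
            = ∑ _j ∈ (Finset.Ioc i0 N).filter (fun j => ¬(X j - X (j-1) = 1)), (2:ℤ) := by
              rw [Finset.sum_const, nsmul_eq_mul]; ring
          _ ≤ _ := Finset.sum_le_sum hb
      have hcast : (((Finset.Ioc i0 N).filter (fun j => ¬(X j - X (j-1) = 1))).card : ℤ)
          = ((N:ℤ) - i0) - r := by omega
      rw [hcast] at h2
      rw [← hS] at hsp
      rw [h1] at hsp
      rw [ht] at hsp
      linarith [h2, hsp]
    have hrpos : (0:ℤ) ≤ (r:ℤ) := by positivity
    rcases eq_or_lt_of_le (Nat.succ_le_of_lt hi0a) with h01 | h01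
    · -- L = 0 : i0 = s+1
      have hi01 : i0 - 1 = s := by omega
      rw [hi01] at hV hc hyyr hyy3 hyx2 hxx
      have hi0c : (i0:ℤ) = (s:ℤ) + 1 := by omega
      have hyypos : 0 ≤ Y s - Y i0 := by linarith
      have hxxV : (Y s - Y i0) + 1 ≤ (X i0 - X s) * Y s := by
        have h9 : (Y s - Y i0) * (X s) ≤ (Y s - Y i0) * (-1) :=
          mul_le_mul_of_nonneg_left hX0 hyypos
        nlinarith [hc, h9]
      have hV2r : 2*(r:ℤ) ≤ Y s := by
        have h6 : (X i0 - X s) * (2*(r:ℤ) - 1) < (X i0 - X s) * Y s := by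
          linarith [hyyr, hxxV]
        have := lt_of_mul_lt_mul_left h6 (by linarith : (0:ℤ) ≤ X i0 - X s)
        linarith
      by_cases h2r : 2 ≤ r
      · have h2rz : (2:ℤ) ≤ (r:ℤ) := by exact_mod_cast h2r
        linarith [hU, hV2r, hSR]
      · have hrz : (r:ℤ) = 1 := by
          have : r = 1 := by omega
          exact_mod_cast this
        rw [hrz] at hV2r hyyr hSR
        by_cases hV3 : 3 ≤ Y s
        · linarith [hU, hSR, hV3]
        · have hVs2 : Y s = 2 := by omega
          rw [hVs2] at hxxV
          have hXs : X s = -1 := by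
            by_contra hne
            have h8 : X s ≤ -2 := by omega
            have h9 : (Y s - Y i0) * X s ≤ (Y s - Y i0) * (-2) :=
              mul_le_mul_of_nonneg_left h8 hyypos
            nlinarith [hc, h9, hyx2, hVs2]
          have hxx3 : 3 ≤ X i0 - X s := by linarith [hxxV, hyx2]
          linarith [hSR, hVs2, hxx3, hXs]
    · -- L ≥ 1 : s+1 < i0
      have hc1 : ((i0-1 : ℕ) : ℤ) = (i0:ℤ) - 1 := by omega
      have hXi01 : (i0:ℤ) - (s:ℤ) - 2 ≤ X (i0-1) := by
        have hcl := climb19 X 1 (s+1) (i0-1) (by omega)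
          (fun j hj hj2 => by have := hx j (by omega) (by omega); linarith)
        have hsc : ((s+1:ℕ):ℤ) = (s:ℤ)+1 := by push_cast; ring
        rw [hc1, hsc] at hcl
        linarith [hs1, hcl]
      by_cases hUV : 3 ≤ X i0 + Y (i0-1)
      · have hyl2r : ∀ j, s < j → j < i0 → 2*(r:ℤ) ≤ Y (j-1) - Y j := by
          intro j hj hji
          have hd := hdet j i0 hj hji hi0b
          have hxj : 1 ≤ X j - X (j-1) := by have := hx j hj (by omega); linarith
          by_contra hcon
          push_neg at hcon
          have h1 : (Y (j-1) - Y j) * (X i0 - X (i0-1)) ≤ (2*(r:ℤ) - 1) * (X i0 - X (i0-1)) :=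
            mul_le_mul_of_nonneg_right (by linarith) (by linarith)
          have h2 : 1 * (Y (i0-1) - Y i0) ≤ (X j - X (j-1)) * (Y (i0-1) - Y i0) :=
            mul_le_mul_of_nonneg_right hxj (by linarith)
          nlinarith [hd, h1, h2, hyyr]
        have hyl : ∀ j, s < j → j < i0 → (r:ℤ)+2 ≤ Y (j-1) - Y j := by
          intro j hj hji
          by_cases h2r : 2 ≤ r
          · have h2rz : (2:ℤ) ≤ (r:ℤ) := by exact_mod_cast h2r
            linarith [hyl2r j hj hji]
          · have hrz : (r:ℤ) = 1 := by
              have : r = 1 := by omega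
              exact_mod_cast this
            rw [hrz]
            linarith [y3 j hj (by omega)]
        have hcl := climb19 (fun n => -(Y n)) ((r:ℤ)+2) s (i0-1) (by omega)
          (fun j hj hj2 => by
            show (r:ℤ)+2 ≤ -(Y j) - -(Y (j-1)); linarith [hyl j hj (by omega)])
        have hcl' : ((r:ℤ)+2) * ((i0:ℤ) - 1 - s) ≤ Y s - Y (i0-1) := by
          have he : (fun n => -(Y n)) (i0-1) - (fun n => -(Y n)) s = Y s - Y (i0-1) := by
            simp; ring
          rw [hc1] at hcl
          linarith [hcl.trans_eq he]
        have hL1 : (1:ℤ) ≤ (i0:ℤ) - 1 - s := by omega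
        have hexp : ((r:ℤ)+2) * ((i0:ℤ) - 1 - s)
            = (r:ℤ)*((i0:ℤ) - 1 - s - 1) + (r:ℤ) + 2*((i0:ℤ) - 1 - s) := by ring
        have hint : (0:ℤ) ≤ (r:ℤ)*((i0:ℤ) - 1 - s - 1) :=
          mul_nonneg hrpos (by linarith)
        rw [hexp] at hcl'
        linarith [hSR, hUV, hcl', hint]
      · push_neg at hUV
        have hU1 : X i0 = 1 := by omega
        have hV1 : Y (i0-1) = 1 := by omega
        have hxyeq : X i0 - X (i0-1) = 1 := by
          by_contra hne
          have hxx2 : 2 ≤ X i0 - X (i0-1) := by omega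
          have h9 : (Y (i0-1) - Y i0) * X (i0-1)
              = (Y (i0-1) - Y i0) * (1 - (X i0 - X (i0-1))) := by
            have : X (i0-1) = 1 - (X i0 - X (i0-1)) := by linarith [hU1]
            rw [← this]
          have hcc : 1 ≤ (Y (i0-1) - Y i0) * (1 - (X i0 - X (i0-1))) + (X i0 - X (i0-1)) := by
            rw [← h9]
            have hc' := hc
            rw [hV1] at hc'
            linarith [hc']
          have h10 : 1*2 ≤ (X i0 - X (i0-1) - 1) * (Y (i0-1) - Y i0 - 1) :=
            mul_le_mul (by linarith) (by linarith) (by norm_num) (by linarith)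
          nlinarith [hcc, h10]
        have hXi0m : X (i0-1) = 0 := by omega
        have hj1s : s < i0 - 1 := by omega
        have hd1 := hdet (i0-1) i0 hj1s (by omega) hi0b
        rw [hxyeq] at hd1
        have hxj1 : 1 ≤ X (i0-1) - X (i0-1-1) := by
          have := hx (i0-1) hj1s (by omega); linarith
        have hyj1 : (Y (i0-1) - Y i0) + 2 ≤ Y (i0-1-1) - Y (i0-1) := by
          have h11 : 1 * (Y (i0-1) - Y i0) ≤ (X (i0-1) - X (i0-1-1)) * (Y (i0-1) - Y i0) :=
            mul_le_mul_of_nonneg_right hxj1 (by linarith)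
          linarith [hd1, h11]
        have hcl := climb19 (fun n => -(Y n)) 3 s (i0-1-1) (by omega)
          (fun j hj hj2 => by
            show (3:ℤ) ≤ -(Y j) - -(Y (j-1)); linarith [y3 j hj (by omega)])
        have hcl' : 3 * (((i0:ℤ) - 2) - s) ≤ Y s - Y (i0-1-1) := by
          have he : (fun n => -(Y n)) (i0-1-1) - (fun n => -(Y n)) s = Y s - Y (i0-1-1) := by
            simp; ring
          have hc2 : ((i0-1-1:ℕ):ℤ) = (i0:ℤ) - 2 := by omega
          rw [hc2] at hcl
          linarith [hcl.trans_eq he]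
        have hyyr1 : 2*(r:ℤ) + 1 ≤ Y (i0-1) - Y i0 := by
          rw [hxyeq] at hyyr; linarith [hyyr]
        have hi0s2 : (2:ℤ) ≤ (i0:ℤ) - (s:ℤ) := by omega
        linarith [hSR, hV1, hyj1, hcl', hyyr1, hU1, hrpos, hi0s2]

private lemma gen_top19 (Γ : AddSubgroup (ℤ × ℤ)) (u w : ℤ × ℤ)
    (hu : u ∈ Γ) (hw : w ∈ Γ) (hdet : u.1 * w.2 - u.2 * w.1 = 1) : Γ = ⊤ := by
  rw [AddSubgroup.eq_top_iff']
  intro z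
  have hz : z = (z.1 * w.2 - z.2 * w.1) • u + (u.1 * z.2 - u.2 * z.1) • w := by
    have h1 : z.1 = (z.1 * w.2 - z.2 * w.1) * u.1 + (u.1 * z.2 - u.2 * z.1) * w.1 := by
      linear_combination (-z.1) * hdet
    have h2 : z.2 = (z.1 * w.2 - z.2 * w.1) * u.2 + (u.1 * z.2 - u.2 * z.1) * w.2 := by
      linear_combination (-z.2) * hdet
    ext
    · simpa using h1
    · simpa using h2
  rw [hz]
  exact Γ.add_mem (Γ.zsmul_mem hu _) (Γ.zsmul_mem hw _)


private lemma main19 : ∀ k : ℕ, ∀ s N : ℕ, ∀ X Y : ℕ → ℤ, N = s + k → 1 ≤ k →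
    (∀ j, s < j → j ≤ N → X (j-1) + 1 ≤ X j) →
    (∀ j, s < j → j ≤ N → Y j + 1 ≤ Y (j-1)) →
    (∀ i j, s < i → i < j → j ≤ N →
      2 ≤ (Y (i-1) - Y i) * (X j - X (j-1)) - (X i - X (i-1)) * (Y (j-1) - Y j)) →
    X s ≤ -1 → Y N ≤ -1 →
    (∃ i0, s < i0 ∧ i0 ≤ N ∧ 1 ≤ X i0 ∧ 1 ≤ Y (i0-1) ∧
      1 ≤ (Y (i0-1) - Y i0) * X (i0-1) + (X i0 - X (i0-1)) * Y (i0-1)) →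
    2*(k:ℤ) + 1 ≤ X N + Y s := by
  intro k
  induction k using Nat.strong_induction_on with
  | _ k IH =>
  intro s N X Y hN hk hx hy hdet hX0 hYN hsp
  obtain ⟨i0, hi0a, hi0b, hU, hV, hc⟩ := hsp
  have hss : (s+1) - 1 = s := by omega
  by_cases hk1 : k = 1
  · subst hk1
    have hii : i0 = N := by omega
    have hi01 : N - 1 = s := by omega
    rw [hii] at hU hV hc
    rw [hi01] at hV hc
    by_contra hcon
    push_neg at hcon
    have hXN : X N = 1 := by push_cast at hcon; omega
    have hYs : Y s = 1 := by push_cast at hcon; omega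
    rw [hXN, hYs] at hc
    have h10 : 1*1 ≤ (-X s)*(-Y N) :=
      mul_le_mul (by linarith) (by linarith) (by norm_num) (by linarith)
    nlinarith [hc, h10]
  have hk2 : 2 ≤ k := by omega
  by_cases hA : X (s+1) ≤ -1 ∧ 2 ≤ Y s - Y (s+1)
  · -- drop first edge
    have hi0s2 : s + 1 < i0 := by
      by_contra hcon
      have : i0 = s + 1 := by omega
      rw [this] at hU
      linarith [hA.1]
    have hrec := IH (k-1) (by omega) (s+1) N X Y (by omega) (by omega)
      (fun j hj hj2 => hx j (by omega) hj2)
      (fun j hj hj2 => hy j (by omega) hj2)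
      (fun i j hi hij hj => hdet i j (by omega) hij hj)
      hA.1 hYN ⟨i0, hi0s2, hi0b, hU, hV, hc⟩
    have hkc : ((k-1:ℕ):ℤ) = (k:ℤ) - 1 := by omega
    rw [hkc] at hrec
    linarith [hA.2, hrec]
  by_cases hB : Y (N-1) ≤ -1 ∧ 2 ≤ X N - X (N-1)
  · -- drop last edge
    have hi0N : i0 < N := by
      by_contra hcon
      have : i0 = N := by omega
      rw [this] at hV
      linarith [hB.1]
    have hrec := IH (k-1) (by omega) s (N-1) X Y (by omega) (by omega)
      (fun j hj hj2 => hx j hj (by omega))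
      (fun j hj hj2 => hy j hj (by omega))
      (fun i j hi hij hj => hdet i j hi hij (by omega))
      hX0 hB.1 ⟨i0, hi0a, by omega, hU, hV, hc⟩
    have hkc : ((k-1:ℕ):ℤ) = (k:ℤ) - 1 := by omega
    rw [hkc] at hrec
    linarith [hB.2, hrec]
  push_neg at hA hB
  by_cases hC : X N - X (N-1) = 1
  · -- case C
    have hor : 0 ≤ X (s+1) ∨ Y (s+1) = Y s - 1 := by
      rcases le_or_gt 0 (X (s+1)) with h | h
      · exact Or.inl h
      · right
        have h1 := hA (by omega)
        have h2 := hy (s+1) (by omega) (by omega)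
        rw [hss] at h2
        omega
    have hCC := caseC19 X Y s N i0 (by omega) hx hy hdet hX0 hYN hi0a hi0b hU hV hc hC hor
    have hNs : (N:ℤ) - (s:ℤ) = (k:ℤ) := by omega
    rw [hNs] at hCC
    linarith [hCC]
  by_cases hD : Y s - Y (s+1) = 1
  · -- mirror, case C on reflected chain
    set X2 : ℕ → ℤ := fun j => Y (N + s - j) with hX2
    set Y2 : ℕ → ℤ := fun j => X (N + s - j) with hY2
    have hx2 : ∀ j, s < j → j ≤ N → X2 (j-1) + 1 ≤ X2 j := by
      intro j hj hj2
      simp only [hX2]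
      have h := hy (N + s - j + 1) (by omega) (by omega)
      have he : (N + s - j + 1) - 1 = N + s - j := by omega
      rw [he] at h
      have he2 : N + s - (j-1) = N + s - j + 1 := by omega
      rw [he2]
      exact h
    have hy2 : ∀ j, s < j → j ≤ N → Y2 j + 1 ≤ Y2 (j-1) := by
      intro j hj hj2
      simp only [hY2]
      have h := hx (N + s - j + 1) (by omega) (by omega)
      have he : (N + s - j + 1) - 1 = N + s - j := by omega
      rw [he] at h
      have he2 : N + s - (j-1) = N + s - j + 1 := by omega
      rw [he2]
      exact h
    have hdet2 : ∀ i j, s < i → i < j → j ≤ N →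
        2 ≤ (Y2 (i-1) - Y2 i) * (X2 j - X2 (j-1)) - (X2 i - X2 (i-1)) * (Y2 (j-1) - Y2 j) := by
      intro i j hi hij hj
      simp only [hX2, hY2]
      have e1 : N + s - (i-1) = (N + s - i) + 1 := by omega
      have e2 : N + s - (j-1) = (N + s - j) + 1 := by omega
      rw [e1, e2]
      have hd := hdet (N + s - j + 1) (N + s - i + 1) (by omega) (by omega) (by omega)
      have e3 : (N + s - j + 1) - 1 = N + s - j := by omega
      have e4 : (N + s - i + 1) - 1 = N + s - i := by omega
      rw [e3, e4] at hd
      nlinarith [hd]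
    have hX02 : X2 s ≤ -1 := by
      simp only [hX2]
      have he : N + s - s = N := by omega
      rw [he]
      exact hYN
    have hYN2 : Y2 N ≤ -1 := by
      simp only [hY2]
      have he : N + s - N = s := by omega
      rw [he]
      exact hX0
    have hsp2 : s < N + s + 1 - i0 ∧ N + s + 1 - i0 ≤ N := by omega
    have e5 : N + s - (N + s + 1 - i0) = i0 - 1 := by omega
    have e6 : N + s - ((N + s + 1 - i0) - 1) = i0 := by omega
    have hU2 : 1 ≤ X2 (N + s + 1 - i0) := by
      simp only [hX2]
      rw [e5]
      exact hV
    have hV2 : 1 ≤ Y2 ((N + s + 1 - i0) - 1) := by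
      simp only [hY2]
      rw [e6]
      exact hU
    have hc2 : 1 ≤ (Y2 ((N + s + 1 - i0) - 1) - Y2 (N + s + 1 - i0)) * X2 ((N + s + 1 - i0) - 1)
        + (X2 (N + s + 1 - i0) - X2 ((N + s + 1 - i0) - 1)) * Y2 ((N + s + 1 - i0) - 1) := by
      simp only [hX2, hY2]
      rw [e5, e6]
      nlinarith [hc]
    have hxN2 : X2 N - X2 (N-1) = 1 := by
      simp only [hX2]
      have e7 : N + s - N = s := by omega
      have e8 : N + s - (N-1) = s + 1 := by omega
      rw [e7, e8]
      omega
    have hor2 : 0 ≤ X2 (s+1) ∨ Y2 (s+1) = Y2 s - 1 := by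
      have e9 : N + s - (s+1) = N - 1 := by omega
      have e10 : N + s - s = N := by omega
      rcases le_or_gt 0 (Y (N-1)) with h | h
      · left
        simp only [hX2]
        rw [e9]
        exact h
      · right
        simp only [hY2]
        rw [e9, e10]
        have h1 := hB (by omega)
        have h2 := hx N (by omega) le_rfl
        omega
    have hCC := caseC19 X2 Y2 s N (N + s + 1 - i0) (by omega) hx2 hy2 hdet2 hX02 hYN2
      hsp2.1 hsp2.2 hU2 hV2 hc2 hxN2 hor2
    have hXY : X2 N + Y2 s = Y s + X N := by
      simp only [hX2, hY2]
      have e7 : N + s - N = s := by omega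
      have e10 : N + s - s = N := by omega
      rw [e7, e10]
    have hNs : (N:ℤ) - (s:ℤ) = (k:ℤ) := by omega
    rw [hNs, hXY] at hCC
    linarith [hCC]
  · -- case E
    have hxNb : 2 ≤ X N - X (N-1) := by
      have := hx N (by omega) le_rfl; omega
    have hys2 : 2 ≤ Y s - Y (s+1) := by
      have h2 := hy (s+1) (by omega) (by omega)
      rw [hss] at h2
      omega
    have hs1 : 0 ≤ X (s+1) := by
      by_contra h; push_neg at h
      have := hA (by omega)
      omega
    have hN1 : 0 ≤ Y (N-1) := by
      by_contra h; push_neg at h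
      have := hB (by omega)
      omega
    have hxx1 : 1 ≤ X i0 - X (i0-1) := by have := hx i0 hi0a hi0b; linarith
    have hyy1 : 1 ≤ Y (i0-1) - Y i0 := by have := hy i0 hi0a hi0b; linarith
    have hUL : (i0:ℤ) - (s:ℤ) - 1 ≤ X i0 := by
      rcases eq_or_lt_of_le (Nat.succ_le_of_lt hi0a) with h | h
      · have hii : i0 = s+1 := by omega
        rw [hii]
        push_cast
        linarith [hs1]
      · have hcl := climb19 X 1 (s+1) i0 (by omega)
          (fun j hj hj2 => by have := hx j (by omega) (by omega); linarith)
        have hsc : ((s+1:ℕ):ℤ) = (s:ℤ)+1 := by push_cast; ring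
        rw [hsc] at hcl
        linarith [hs1, hcl]
    have hVR : (N:ℤ) - (i0:ℤ) ≤ Y (i0-1) := by
      rcases eq_or_lt_of_le hi0b with h | h
      · rw [h]
        push_cast
        linarith [hV]
      · have hcl := climb19 (fun n => -(Y n)) 1 (i0-1) (N-1) (by omega)
          (fun j hj hj2 => by
            show (1:ℤ) ≤ -(Y j) - -(Y (j-1))
            have := hy j (by omega) (by omega); linarith)
        have he : (fun n => -(Y n)) (N-1) - (fun n => -(Y n)) (i0-1) = Y (i0-1) - Y (N-1) := by
          show (-(Y (N-1))) - (-(Y (i0-1))) = Y (i0-1) - Y (N-1)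
          ring
        have he2 : ((N-1:ℕ):ℤ) - ((i0-1:ℕ):ℤ) = (N:ℤ) - i0 := by omega
        rw [he2] at hcl
        have := hcl.trans_eq he
        linarith [hN1, this]
    by_cases hlw : ∃ j, s < j ∧ j < i0 ∧ Y (j-1) - Y j = 1
    · -- left narrow edge: crossing edge is wide, all right edges wide
      obtain ⟨j0, hj0s, hj0i, hyj0⟩ := hlw
      have hxxb : (Y (i0-1) - Y i0) + 2 ≤ X i0 - X (i0-1) := by
        have hd := hdet j0 i0 hj0s hj0i hi0b
        rw [hyj0] at hd
        have hxj0 : 1 ≤ X j0 - X (j0-1) := by have := hx j0 hj0s (by omega); linarith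
        have h2 : 1*(Y (i0-1) - Y i0) ≤ (X j0 - X (j0-1)) * (Y (i0-1) - Y i0) :=
          mul_le_mul_of_nonneg_right hxj0 (by linarith)
        linarith [hd, h2]
      have hrw2 : ∀ l, i0 < l → l ≤ N → 2 ≤ X l - X (l-1) := by
        intro l hl1 hl2
        have hd := hdet i0 l hi0a hl1 hl2
        by_contra hcon
        push_neg at hcon
        have hxl : X l - X (l-1) = 1 := by
          have := hx l (by omega) hl2; omega
        rw [hxl] at hd
        have hyl : 1 ≤ Y (l-1) - Y l := by have := hy l (by omega) hl2; linarith
        have h2 : (X i0 - X (i0-1))*1 ≤ (X i0 - X (i0-1)) * (Y (l-1) - Y l) :=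
          mul_le_mul_of_nonneg_left hyl (by linarith)
        linarith [hd, h2, hxxb, hyy1]
      have hXi01 : (i0:ℤ) - (s:ℤ) - 2 ≤ X (i0-1) := by
        have hcl := climb19 X 1 (s+1) (i0-1) (by omega)
          (fun j hj hj2 => by have := hx j (by omega) (by omega); linarith)
        have hsc : ((s+1:ℕ):ℤ) = (s:ℤ)+1 := by push_cast; ring
        have hic : ((i0-1:ℕ):ℤ) = (i0:ℤ)-1 := by omega
        rw [hsc, hic] at hcl
        linarith [hs1, hcl]
      have hclL := climb19 (fun n => -(Y n)) 1 s (i0-1) (by omega)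
        (fun j hj hj2 => by
          show (1:ℤ) ≤ -(Y j) - -(Y (j-1))
          have := hy j (by omega) (by omega); linarith)
      have heL : (fun n => -(Y n)) (i0-1) - (fun n => -(Y n)) s = Y s - Y (i0-1) := by
        simp; ring
      have hic : ((i0-1:ℕ):ℤ) = (i0:ℤ)-1 := by omega
      rw [hic] at hclL
      have hclL' := hclL.trans_eq heL
      have hclR := climb19 X 2 i0 N (by omega) (fun j hj hj2 => by
        have := hrw2 j hj hj2; linarith)
      linarith [hclR, hclL', hXi01, hxxb, hyy1, hV, hU]
    by_cases hrw : ∃ l, i0 < l ∧ l ≤ N ∧ X l - X (l-1) = 1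
    · -- right narrow edge
      obtain ⟨l0, hl0a, hl0b, hxl0⟩ := hrw
      have hyyb : (X i0 - X (i0-1)) + 2 ≤ Y (i0-1) - Y i0 := by
        have hd := hdet i0 l0 hi0a hl0a hl0b
        rw [hxl0] at hd
        have hyl0 : 1 ≤ Y (l0-1) - Y l0 := by have := hy l0 (by omega) hl0b; linarith
        have h2 : (X i0 - X (i0-1))*1 ≤ (X i0 - X (i0-1)) * (Y (l0-1) - Y l0) :=
          mul_le_mul_of_nonneg_left hyl0 (by linarith)
        linarith [hd, h2]
      have hlw2 : ∀ j, s < j → j < i0 → 2 ≤ Y (j-1) - Y j := by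
        intro j hj1 hj2
        have hd := hdet j i0 hj1 hj2 hi0b
        by_contra hcon
        push_neg at hcon
        have hyj : Y (j-1) - Y j = 1 := by
          have := hy j hj1 (by omega); omega
        rw [hyj] at hd
        have hxj : 1 ≤ X j - X (j-1) := by have := hx j hj1 (by omega); linarith
        have h2 : 1*(Y (i0-1) - Y i0) ≤ (X j - X (j-1)) * (Y (i0-1) - Y i0) :=
          mul_le_mul_of_nonneg_right hxj (by linarith)
        linarith [hd, h2, hyyb, hxx1]
      have hi0N1 : i0 ≤ N - 1 := by omega
      have hYi0 : (N:ℤ) - 1 - (i0:ℤ) ≤ Y i0 := by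
        have hcl := climb19 (fun n => -(Y n)) 1 i0 (N-1) (by omega)
          (fun j hj hj2 => by
            show (1:ℤ) ≤ -(Y j) - -(Y (j-1))
            have := hy j (by omega) (by omega); linarith)
        have he : (fun n => -(Y n)) (N-1) - (fun n => -(Y n)) i0 = Y i0 - Y (N-1) := by
          show (-(Y (N-1))) - (-(Y i0)) = Y i0 - Y (N-1)
          ring
        have he2 : ((N-1:ℕ):ℤ) - (i0:ℤ) = (N:ℤ) - 1 - i0 := by omega
        rw [he2] at hcl
        linarith [hN1, hcl.trans_eq he]
      have hclL := climb19 (fun n => -(Y n)) 2 s (i0-1) (by omega)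
        (fun j hj hj2 => by
          show (2:ℤ) ≤ -(Y j) - -(Y (j-1))
          have := hlw2 j hj (by omega); linarith)
      have heL : (fun n => -(Y n)) (i0-1) - (fun n => -(Y n)) s = Y s - Y (i0-1) := by
        simp; ring
      have hic : ((i0-1:ℕ):ℤ) = (i0:ℤ)-1 := by omega
      rw [hic] at hclL
      have hclL' := hclL.trans_eq heL
      have hclR := climb19 X 1 i0 N (by omega) (fun j hj hj2 => by
        have := hx j (by omega) hj2; linarith)
      linarith [hclR, hclL', hYi0, hyyb, hxx1, hU]
    · -- both sides wide
      push_neg at hlw hrw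
      have hlw2 : ∀ j, s < j → j < i0 → 2 ≤ Y (j-1) - Y j := by
        intro j h1 h2
        have ha := hy j h1 (by omega)
        have hb := hlw j h1 h2
        omega
      have hrw2 : ∀ l, i0 < l → l ≤ N → 2 ≤ X l - X (l-1) := by
        intro l h1 h2
        have ha := hx l (by omega) h2
        have hb := hrw l h1 h2
        omega
      have hclL := climb19 (fun n => -(Y n)) 2 s (i0-1) (by omega)
        (fun j hj hj2 => by
          show (2:ℤ) ≤ -(Y j) - -(Y (j-1))
          have := hlw2 j hj (by omega); linarith)
      have heL : (fun n => -(Y n)) (i0-1) - (fun n => -(Y n)) s = Y s - Y (i0-1) := by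
        simp; ring
      have hic : ((i0-1:ℕ):ℤ) = (i0:ℤ)-1 := by omega
      rw [hic] at hclL
      have hclL' := hclL.trans_eq heL
      have hclR := climb19 X 2 i0 N (by omega) (fun j hj hj2 => by
        have := hrw2 j hj hj2; linarith)
      by_cases hUV : 3 ≤ X i0 + Y (i0-1)
      · linarith [hclL', hclR, hUV]
      · push_neg at hUV
        have hU1 : X i0 = 1 := by omega
        have hV1 : Y (i0-1) = 1 := by omega
        have hL1 : i0 ≤ s + 2 := by omega
        have hR1 : N ≤ i0 + 1 := by omega
        have hxy : X i0 - X (i0-1) = 1 ∨ Y (i0-1) - Y i0 = 1 := by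
          by_contra hcon
          push_neg at hcon
          have hxx2 : 2 ≤ X i0 - X (i0-1) := by omega
          have hyy2 : 2 ≤ Y (i0-1) - Y i0 := by omega
          have h9 : (Y (i0-1) - Y i0) * X (i0-1)
              = (Y (i0-1) - Y i0) * (1 - (X i0 - X (i0-1))) := by
            have h99 : X (i0-1) = 1 - (X i0 - X (i0-1)) := by linarith
            rw [← h99]
          have hc' := hc
          rw [h9, hV1] at hc'
          have h10 : 1*1 ≤ (X i0 - X (i0-1) - 1)*(Y (i0-1) - Y i0 - 1) :=
            mul_le_mul (by linarith) (by linarith) (by norm_num) (by linarith)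
          nlinarith [hc', h10]
        have hii : i0 = s + 1 ∨ i0 = s + 2 := by omega
        rcases hii with hii | hii
        · exfalso
          have he : i0 - 1 = s := by omega
          have hxxv : 2 ≤ X i0 - X (i0-1) := by
            rw [he, hii]
            have : X (s+1) = 1 := by rw [← hii]; exact hU1
            omega
          have hyyv : Y (i0-1) - Y i0 = 1 := by
            rcases hxy with h | h
            · omega
            · exact h
          rw [he, hii] at hyyv
          omega
        · have hNN : N = i0 ∨ N = i0 + 1 := by omega
          rcases hNN with hNN | hNN
          · exfalso
            rcases hxy with h | h
            · rw [← hNN] at h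
              omega
            · have hYi0 : Y i0 = 0 := by omega
              rw [← hNN] at hYi0
              omega
          · have he2 : i0 - 1 = s + 1 := by omega
            have hxxe : X i0 - X (i0-1) = 1 := by
              by_contra hne
              have hxx2 : 2 ≤ X i0 - X (i0-1) := by omega
              have hXi : X (i0-1) ≤ -1 := by omega
              rw [he2] at hXi
              omega
            have hXi0 : X (i0-1) = 0 := by omega
            have hyye : Y (i0-1) - Y i0 = 1 := by
              have he3 : N - 1 = i0 := by omega
              have h0 : 0 ≤ Y i0 := by rw [← he3]; exact hN1
              omega
            have hd1 := hdet (s+1) i0 (by omega) (by omega) hi0b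
            rw [hss, hxxe, hyye] at hd1
            have hxs1 : 1 ≤ X (s+1) - X s := by
              have := hx (s+1) (by omega) (by omega)
              rw [hss] at this
              linarith
            have hd2 := hdet i0 N hi0a (by omega) le_rfl
            rw [hxxe, hyye] at hd2
            have hyN1 : 1 ≤ Y (N-1) - Y N := by
              have := hy N (by omega) le_rfl; linarith
            have he4 : X (N-1) = 1 := by
              have : N - 1 = i0 := by omega
              rw [this]; exact hU1
            have he5 : Y (s+1) = 1 := by
              rw [← he2]; exact hV1
            have hkk : k = 3 := by omega
            rw [hkk]
            push_cast
            linarith [hd1, hd2, hxs1, hyN1, he4, he5]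

/-- Lemma: if an integer frame splits an integer slope all of whose vertices belong to a
proper sublattice `Γ` of `ℤ²`, then `π̂(E) ≥ 1`; equivalently, `w₁ + v₂ - 2N ≥ 1`, where
`(v₁, v₂)` and `(w₁, w₂)` are the frame coordinates of the endpoints. -/
theorem stmt19 (o f₁ f₂ : ℤ × ℤ) (hbasis : IsZBasis f₁ f₂)
    (N : ℕ) (hN : 1 ≤ N) (v a c : ℕ → ℤ × ℤ)
    (hslope : IsIntSlope f₁ f₂ N v a)
    (hcoords : FrameCoords o f₁ f₂ N v c)
    (hsplit : FrameSplits N c)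
    (Γ : AddSubgroup (ℤ × ℤ)) (hΓ : IsSublatticeZ2 Γ) (hproper : Γ ≠ ⊤)
    (hmem : ∀ i ≤ N, v i ∈ Γ) :
    1 ≤ ∑ i ∈ Finset.Icc 1 N, piHat c i ∧
    1 ≤ (c N).1 + (c 0).2 - 2 * (N : ℤ) := by
  obtain ⟨hslope1, hslope2, hslope3⟩ := hslope
  -- step coordinates
  have hstep : ∀ i, 1 ≤ i → i ≤ N →
      (c i).1 - (c (i-1)).1 = (a i).1 ∧ (c i).2 - (c (i-1)).2 = (a i).2 := by
    intro i hi1 hi2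
    have h1 := hcoords i hi2
    have h0 := hcoords (i-1) (by omega)
    have hs := hslope1 i hi1 hi2
    rw [h1, h0] at hs
    have hs1 := congrArg Prod.fst hs
    have hs2 := congrArg Prod.snd hs
    simp only [Prod.fst_sub, Prod.fst_add, Prod.smul_fst, Prod.snd_sub, Prod.snd_add,
      Prod.smul_snd, smul_eq_mul] at hs1 hs2
    constructor
    · rcases hbasis with hb | hb
      · linear_combination f₂.2 * hs1 - f₂.1 * hs2 -
          ((c i).1 - (c (i-1)).1 - (a i).1) * hb
      · linear_combination (-f₂.2) * hs1 + f₂.1 * hs2 +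
          ((c i).1 - (c (i-1)).1 - (a i).1) * hb
    · rcases hbasis with hb | hb
      · linear_combination (-f₁.2) * hs1 + f₁.1 * hs2 -
          ((c i).2 - (c (i-1)).2 - (a i).2) * hb
      · linear_combination f₁.2 * hs1 - f₁.1 * hs2 +
          ((c i).2 - (c (i-1)).2 - (a i).2) * hb
  have hapos : ∀ i, 1 ≤ i → i ≤ N → 1 ≤ (a i).1 ∧ (a i).2 ≤ -1 := by
    intro i h1 h2
    have := hslope2 i h1 h2
    omega
  -- pairwise determinants ≥ 1
  have hDpair : ∀ i j, 1 ≤ i → i < j → j ≤ N →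
      1 ≤ (a i).1 * (a j).2 - (a i).2 * (a j).1 := by
    intro i j hi hij hjN
    have key : ∀ j', i + 1 ≤ j' → j' ≤ N → 1 ≤ (a i).1 * (a j').2 - (a i).2 * (a j').1 := by
      intro j' hj'
      induction j', hj' using Nat.le_induction with
      | base =>
          intro hN'
          have := hslope3 i hi (by omega)
          omega
      | succ m hm ihm =>
          intro hmN
          have h1 := ihm (by omega)
          have h2 : 1 ≤ (a m).1 * (a (m+1)).2 - (a m).2 * (a (m+1)).1 := by
            have := hslope3 m (by omega) (by omega)
            omega
          have hxm := (hapos m (by omega) (by omega)).1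
          have hxi := (hapos i hi (by omega)).1
          have hxm1 := (hapos (m+1) (by omega) (by omega)).1
          by_contra hcon
          push_neg at hcon
          have hid : (a m).1 * ((a i).1*(a (m+1)).2 - (a i).2*(a (m+1)).1)
              = (a (m+1)).1 * ((a i).1*(a m).2 - (a i).2*(a m).1)
              + (a i).1 * ((a m).1*(a (m+1)).2 - (a m).2*(a (m+1)).1) := by ring
          have hle : (a m).1 * ((a i).1*(a (m+1)).2 - (a i).2*(a (m+1)).1) ≤ 0 :=
            mul_nonpos_of_nonneg_of_nonpos (by linarith) (by linarith)
          have hp1 : (a (m+1)).1 * 1 ≤ (a (m+1)).1 * ((a i).1*(a m).2 - (a i).2*(a m).1) :=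
            mul_le_mul_of_nonneg_left h1 (by linarith)
          have hp2 : (a i).1 * 1 ≤ (a i).1 * ((a m).1*(a (m+1)).2 - (a m).2*(a (m+1)).1) :=
            mul_le_mul_of_nonneg_left h2 (by linarith)
          linarith [hid, hle, hp1, hp2, hxm1, hxi]
    exact key j hij hjN
  -- pairwise determinants ≥ 2 using the sublattice
  have hDpair2 : ∀ i j, 1 ≤ i → i < j → j ≤ N →
      2 ≤ (a i).1 * (a j).2 - (a i).2 * (a j).1 := by
    intro i j hi hij hjN
    have h1 := hDpair i j hi hij hjN
    by_contra hcon
    push_neg at hcon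
    have hD1 : (a i).1 * (a j).2 - (a i).2 * (a j).1 = 1 := by omega
    exfalso
    have hui : v i - v (i-1) ∈ Γ := AddSubgroup.sub_mem Γ (hmem i (by omega)) (hmem (i-1) (by omega))
    have huj : v j - v (j-1) ∈ Γ := AddSubgroup.sub_mem Γ (hmem j (by omega)) (hmem (j-1) (by omega))
    rw [hslope1 i (by omega) (by omega)] at hui
    rw [hslope1 j (by omega) (by omega)] at huj
    set u : ℤ × ℤ := (a i).1 • f₁ + (a i).2 • f₂ with hu
    set w : ℤ × ℤ := (a j).1 • f₁ + (a j).2 • f₂ with hw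
    have hdetuw : u.1 * w.2 - u.2 * w.1
        = ((a i).1*(a j).2 - (a i).2*(a j).1) * (f₁.1*f₂.2 - f₁.2*f₂.1) := by
      simp only [hu, hw, Prod.fst_add, Prod.smul_fst, Prod.snd_add, Prod.smul_snd, smul_eq_mul]
      ring
    rw [hD1, one_mul] at hdetuw
    rcases hbasis with hb | hb
    · rw [hb] at hdetuw
      exact hproper (gen_top19 Γ u w hui huj hdetuw)
    · rw [hb] at hdetuw
      have hdetwu : w.1 * u.2 - w.2 * u.1 = 1 := by linarith [hdetuw]
      exact hproper (gen_top19 Γ w u huj hui hdetwu)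
  -- split data
  obtain ⟨hc0x, hc0y, hcNx, hcNy, i0, hi01, hi0N, lam, hl0, hl1, hq1, hq2⟩ := hsplit
  have hstepi := hstep i0 hi01 hi0N
  have hai := hapos i0 hi01 hi0N
  have hXi1 : 1 ≤ (c i0).1 := by
    have hd : (0:ℝ) ≤ (1 - lam) * (((c i0).1 : ℝ) - ((c (i0-1)).1 : ℝ)) := by
      apply mul_nonneg (by linarith)
      have : (1:ℝ) ≤ ((c i0).1 : ℝ) - ((c (i0-1)).1 : ℝ) := by
        have h7 : (1:ℤ) ≤ (c i0).1 - (c (i0-1)).1 := by omega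
        exact_mod_cast h7
      linarith
    have hpos : (0:ℝ) < ((c i0).1 : ℝ) := by nlinarith [hq1, hd]
    exact_mod_cast hpos
  have hYi1 : 1 ≤ (c (i0-1)).2 := by
    have hd : (0:ℝ) ≤ lam * (((c (i0-1)).2 : ℝ) - ((c i0).2 : ℝ)) := by
      apply mul_nonneg hl0
      have : (1:ℝ) ≤ ((c (i0-1)).2 : ℝ) - ((c i0).2 : ℝ) := by
        have h7 : (1:ℤ) ≤ (c (i0-1)).2 - (c i0).2 := by omega
        exact_mod_cast h7
      linarith
    have hpos : (0:ℝ) < ((c (i0-1)).2 : ℝ) := by nlinarith [hq2, hd]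
    exact_mod_cast hpos
  have hcc : 1 ≤ ((c (i0-1)).2 - (c i0).2) * (c (i0-1)).1
      + ((c i0).1 - (c (i0-1)).1) * (c (i0-1)).2 := by
    have hkey : ((((c (i0-1)).2 - (c i0).2) * (c (i0-1)).1
        + ((c i0).1 - (c (i0-1)).1) * (c (i0-1)).2 : ℤ) : ℝ)
        = (((c (i0-1)).2 : ℝ) - ((c i0).2 : ℝ)) *
            ((1 - lam) * ((c (i0-1)).1 : ℝ) + lam * ((c i0).1 : ℝ))
          + (((c i0).1 : ℝ) - ((c (i0-1)).1 : ℝ)) *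
            ((1 - lam) * ((c (i0-1)).2 : ℝ) + lam * ((c i0).2 : ℝ)) := by
      push_cast
      ring
    have hy' : (0:ℝ) < ((c (i0-1)).2 : ℝ) - ((c i0).2 : ℝ) := by
      have h7 : (1:ℤ) ≤ (c (i0-1)).2 - (c i0).2 := by omega
      have : (1:ℝ) ≤ ((c (i0-1)).2 : ℝ) - ((c i0).2 : ℝ) := by exact_mod_cast h7
      linarith
    have hx' : (0:ℝ) < ((c i0).1 : ℝ) - ((c (i0-1)).1 : ℝ) := by
      have h7 : (1:ℤ) ≤ (c i0).1 - (c (i0-1)).1 := by omega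
      have : (1:ℝ) ≤ ((c i0).1 : ℝ) - ((c (i0-1)).1 : ℝ) := by exact_mod_cast h7
      linarith
    have hpos : (0:ℝ) < ((((c (i0-1)).2 - (c i0).2) * (c (i0-1)).1
        + ((c i0).1 - (c (i0-1)).1) * (c (i0-1)).2 : ℤ) : ℝ) := by
      rw [hkey]
      exact add_pos (mul_pos hy' hq1) (mul_pos hx' hq2)
    have : (0:ℤ) < ((c (i0-1)).2 - (c i0).2) * (c (i0-1)).1
        + ((c i0).1 - (c (i0-1)).1) * (c (i0-1)).2 := by exact_mod_cast hpos
    omega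
  -- apply the main lemma with X := fun n => (c n).1, Y := fun n => (c n).2
  have hmain := main19 N 0 N (fun n => (c n).1) (fun n => (c n).2) (by omega) hN
    (fun j hj hj2 => by
      have := (hstep j (by omega) hj2).1
      have := (hapos j (by omega) hj2).1
      omega)
    (fun j hj hj2 => by
      have := (hstep j (by omega) hj2).2
      have := (hapos j (by omega) hj2).2
      omega)
    (fun i j hi hij hj => by
      have e1 := (hstep i (by omega) (by omega)).1
      have e2 := (hstep i (by omega) (by omega)).2
      have e3 := (hstep j (by omega) hj).1
      have e4 := (hstep j (by omega) hj).2
      have hD := hDpair2 i j (by omega) hij hj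
      have heq : ((c (i-1)).2 - (c i).2) * ((c j).1 - (c (j-1)).1)
          - ((c i).1 - (c (i-1)).1) * ((c (j-1)).2 - (c j).2)
          = (a i).1 * (a j).2 - (a i).2 * (a j).1 := by
        rw [show (c (i-1)).2 - (c i).2 = -((a i).2) by omega,
           show (c j).1 - (c (j-1)).1 = (a j).1 by omega,
           show (c i).1 - (c (i-1)).1 = (a i).1 by omega,
           show (c (j-1)).2 - (c j).2 = -((a j).2) by omega]
        ring
      linarith [heq, hD])
    (by omega)
    (by omega)
    ⟨i0, by omega, hi0N, by omega, by omega,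
      by linarith [hcc]⟩
  have hpart2 : 1 ≤ (c N).1 + (c 0).2 - 2 * (N : ℤ) := by linarith [hmain]
  refine ⟨?_, hpart2⟩
  -- telescoping the sums
  have hIcc : Finset.Icc 1 N = Finset.Ioc 0 N := by
    ext x
    simp [Finset.mem_Icc, Finset.mem_Ioc]
    omega
  have ht1 : ∑ i ∈ Finset.Icc 1 N, pi1 c i = (c N).1 := by
    rw [hIcc]
    have := sumtele19 (fun n => max (c n).1 0) 0 N (by omega)
    have he : ∑ j ∈ Finset.Ioc 0 N, pi1 c j
        = ∑ j ∈ Finset.Ioc 0 N, ((fun n => max (c n).1 0) j - (fun n => max (c n).1 0) (j-1)) := by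
      apply Finset.sum_congr rfl
      intro j hj
      simp [pi1]
    rw [he, this]
    rw [max_eq_left (by omega : (0:ℤ) ≤ (c N).1), max_eq_right (by omega : (c 0).1 ≤ (0:ℤ))]
    ring
  have ht2 : ∑ i ∈ Finset.Icc 1 N, pi2 c i = (c 0).2 := by
    rw [hIcc]
    have := sumtele19 (fun n => -(max (c n).2 0)) 0 N (by omega)
    have he : ∑ j ∈ Finset.Ioc 0 N, pi2 c j
        = ∑ j ∈ Finset.Ioc 0 N, ((fun n => -(max (c n).2 0)) j - (fun n => -(max (c n).2 0)) (j-1)) := by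
      apply Finset.sum_congr rfl
      intro j hj
      simp [pi2]
      ring
    rw [he, this]
    rw [max_eq_left (by omega : (0:ℤ) ≤ (c 0).2), max_eq_right (by omega : (c N).2 ≤ (0:ℤ))]
    ring
  have ht3 : ∑ i ∈ Finset.Icc 1 N, piHat c i
      = (∑ i ∈ Finset.Icc 1 N, pi1 c i) + (∑ i ∈ Finset.Icc 1 N, pi2 c i) - 2*(N:ℤ) := by
    have : ∀ i ∈ Finset.Icc 1 N, piHat c i = pi1 c i + pi2 c i - 2 := by
      intro i _; rfl
    rw [Finset.sum_congr rfl this]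
    rw [Finset.sum_sub_distrib, Finset.sum_add_distrib, Finset.sum_const, Nat.card_Icc]
    push_cast
    ring
  rw [ht3, ht1, ht2]
  linarith [hpart2]
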